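/- Let (V, →) be a countably infinite tournament with the extension property: for all disjoint finite sets A, B ⊆ V there exists x ∈ V \ (A ∪ B) with x → a for all a ∈ A and b → x for all b ∈ B. (Such a tournament is the random tournament 𝕋^∞.) Then its distinguishing number is 2: there exists a coloring c : V → Bool such that the only automorphism g of the tournament with c ∘ g = c is the identity, while the tournament does have a nontrivial automorphism. -/

import Mathlib

set_option linter.unusedSectionVars false
set_option maxHeartbeats 1000000

namespace RandTour

variable {V : Type*} (R : V → V → Prop)

theorem step_ex
    (htot : ∀ x y : V, x ≠ y → (R x y ↔ ¬ R y x))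
    (hext : ∀ A B : Finset V, Disjoint A B →
      ∃ x, x ∉ A ∧ x ∉ B ∧ (∀ a ∈ A, R x a) ∧ (∀ b ∈ B, R b x))
    (l : List V) (u w : V) :
    ∃ x, x ∉ l ∧ (∀ b ∈ l, R b x) ∧
      (u ≠ w → u ∉ l → w ∉ l → R x u ∧ ¬ R x w) := by
  classical
  by_cases h : u ≠ w ∧ u ∉ l ∧ w ∉ l
  · obtain ⟨huw, hul, hwl⟩ := h
    obtain ⟨x, hxA, hxB, hA, hB⟩ := hext {u} (insert w l.toFinset) (by
      simp only [Finset.disjoint_singleton_left, Finset.mem_insert, List.mem_toFinset]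
      tauto)
    have hxw : x ≠ w := fun h => hxB (by simp [h])
    refine ⟨x, fun hxl => hxB (by simp [hxl]), fun b hb => hB b (by simp [hb]), ?_⟩
    intro _ _ _
    refine ⟨hA u (by simp), ?_⟩
    have hwx : R w x := hB w (by simp)
    exact fun hxw' => ((htot x w hxw).mp hxw') hwx
  · obtain ⟨x, _, hxB, _, hB⟩ := hext ∅ l.toFinset (by simp)
    exact ⟨x, fun hxl => hxB (by simp [hxl]), fun b hb => hB b (by simp [hb]),
      fun h1 h2 h3 => absurd ⟨h1, h2, h3⟩ h⟩

variable (htot : ∀ x y : V, x ≠ y → (R x y ↔ ¬ R y x))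
    (hext : ∀ A B : Finset V, Disjoint A B →
      ∃ x, x ∉ A ∧ x ∉ B ∧ (∀ a ∈ A, R x a) ∧ (∀ b ∈ B, R b x))

noncomputable def chainList (q : ℕ → V × V) : ℕ → List V
  | 0 => []
  | n+1 => chainList q n ++
      [(step_ex R htot hext (chainList q n) (q n).1 (q n).2).choose]

noncomputable def dvert (q : ℕ → V × V) (n : ℕ) : V :=
  (step_ex R htot hext (chainList R htot hext q n) (q n).1 (q n).2).choose

theorem chainList_eq (q : ℕ → V × V) (n : ℕ) :
    chainList R htot hext q n = (List.range n).map (dvert R htot hext q) := by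
  induction n with
  | zero => simp [chainList]
  | succ n ih => rw [chainList, List.range_succ, List.map_append, ← ih]; rfl

theorem dvert_spec (q : ℕ → V × V) (n : ℕ) :
    (dvert R htot hext q n) ∉ chainList R htot hext q n ∧
    (∀ b ∈ chainList R htot hext q n, R b (dvert R htot hext q n)) ∧
    ((q n).1 ≠ (q n).2 → (q n).1 ∉ chainList R htot hext q n →
      (q n).2 ∉ chainList R htot hext q n →
      R (dvert R htot hext q n) (q n).1 ∧ ¬ R (dvert R htot hext q n) (q n).2) :=
  (step_ex R htot hext (chainList R htot hext q n) (q n).1 (q n).2).choose_spec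

theorem dvert_chain (q : ℕ → V × V) {i j : ℕ} (h : i < j) :
    R (dvert R htot hext q i) (dvert R htot hext q j) := by
  apply (dvert_spec R htot hext q j).2.1
  rw [chainList_eq]
  exact List.mem_map_of_mem (List.mem_range.mpr h)

theorem dvert_inj (q : ℕ → V × V) (hirr : ∀ x, ¬ R x x) :
    Function.Injective (dvert R htot hext q) := by
  intro i j hij
  rcases lt_trichotomy i j with h | h | h
  · exact absurd (hij ▸ dvert_chain R htot hext q h) (hirr _)
  · exact h
  · exact absurd (hij ▸ dvert_chain R htot hext q h) (hirr _)

include htot hext in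
theorem exists_distinguishing (hirr : ∀ x, ¬ R x x) (e : ℕ ≃ V) :
    ∃ c : V → Bool, ∀ g : V ≃ V, (∀ x y, R x y ↔ R (g x) (g y)) →
        (∀ v, c (g v) = c v) → ∀ v, g v = v := by
  classical
  set q : ℕ → V × V := fun n => (e (Nat.unpair n).1, e (Nat.unpair n).2) with hq
  set d := dvert R htot hext q with hd
  refine ⟨fun v => decide (∃ n, d n = v), ?_⟩
  intro g hg hc
  have hc' : ∀ v, (∃ n, d n = g v) ↔ (∃ n, d n = v) := fun v => decide_eq_decide.mp (hc v)
  have hinj : Function.Injective d := dvert_inj R htot hext q hirr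
  have hfix : ∀ i, g (d i) = d i := by
    have hσex : ∀ i, ∃ n, d n = g (d i) := fun i => (hc' (d i)).mpr ⟨i, rfl⟩
    set σ : ℕ → ℕ := fun i => (hσex i).choose with hσ
    have hσd : ∀ i, d (σ i) = g (d i) := fun i => (hσex i).choose_spec
    have hmono : StrictMono σ := by
      intro i j hij
      have h1 : R (d (σ i)) (d (σ j)) := by
        rw [hσd, hσd]; exact (hg (d i) (d j)).mp (dvert_chain R htot hext q hij)
      rcases lt_trichotomy (σ i) (σ j) with h | h | h
      · exact h
      · exact absurd (h ▸ h1) (hirr _)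
      · have hne : d (σ i) ≠ d (σ j) := fun he => hirr _ (he ▸ h1)
        exact absurd (dvert_chain R htot hext q h) ((htot _ _ hne).mp h1)
    have hsurj : ∀ n, ∃ m, σ m = n := by
      intro n
      have h1 : ∃ m, d m = g (g.symm (d n)) := ⟨n, by rw [g.apply_symm_apply]⟩
      obtain ⟨m, hm⟩ := (hc' (g.symm (d n))).mp h1
      refine ⟨m, hinj ?_⟩
      rw [hσd m, hm, g.apply_symm_apply]
    have hid : ∀ n, σ n = n := by
      intro n
      induction n using Nat.strong_induction_on with
      | _ n ih =>
        obtain ⟨m, hm⟩ := hsurj n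
        have hmn : m ≤ n := hm ▸ hmono.le_apply
        rcases eq_or_lt_of_le hmn with rfl | hlt
        · exact hm
        · exact absurd ((ih m hlt).symm.trans hm) (Nat.ne_of_lt hlt)
    intro i
    rw [← hσd, hid]
  intro v
  by_cases hv : ∃ i, d i = v
  · obtain ⟨i, rfl⟩ := hv
    exact hfix i
  by_contra hne
  have hgv : ¬ ∃ i, d i = g v := fun h => hv ((hc' v).mp h)
  set n := Nat.pair (e.symm v) (e.symm (g v)) with hn
  have hqn : q n = (v, g v) := by
    rw [hq, hn]
    simp [Nat.unpair_pair]
  have hnotmem : ∀ u : V, (¬ ∃ i, d i = u) → u ∉ chainList R htot hext q n := by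
    intro u hu hmem
    rw [chainList_eq] at hmem
    obtain ⟨i, _, hi⟩ := List.mem_map.mp hmem
    exact hu ⟨i, hi⟩
  have hspec := (dvert_spec R htot hext q n).2.2
  rw [hqn] at hspec
  obtain ⟨h1, h2⟩ := hspec (fun he => hne he.symm) (hnotmem v hv) (hnotmem _ hgv)
  have h3 := (hg (d n) v).mp h1
  rw [hfix n] at h3
  exact h2 h3

end RandTour

namespace RandTour2
variable {V : Type*} (R : V → V → Prop)

def Inv (L : List (V × V)) : Prop :=
  L.Pairwise (fun p r => p.1 ≠ r.1 ∧ p.2 ≠ r.2) ∧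
  ∀ p ∈ L, ∀ r ∈ L, (R p.1 r.1 ↔ R p.2 r.2)

theorem ext_pair
    (htot : ∀ x y : V, x ≠ y → (R x y ↔ ¬ R y x))
    (hext : ∀ A B : Finset V, Disjoint A B →
      ∃ x, x ∉ A ∧ x ∉ B ∧ (∀ a ∈ A, R x a) ∧ (∀ b ∈ B, R b x))
    (L : List (V × V)) (v : V) (hI : Inv R L) (hv : v ∉ L.map Prod.fst) :
    ∃ w, w ∉ L.map Prod.snd ∧
      ∀ p ∈ L, (R v p.1 ↔ R w p.2) ∧ (R p.1 v ↔ R p.2 w) := by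
  classical
  obtain ⟨hnd, hiso⟩ := hI
  have hsnd : ∀ p ∈ L, ∀ r ∈ L, p.2 = r.2 → p = r := by
    intro p hp r hr h
    by_contra hne
    exact (@List.Pairwise.forall _ _ _ ⟨fun a b h => ⟨h.1.symm, h.2.symm⟩⟩ hnd _ hp _ hr hne).2 h
  set A : Finset V := ((L.filter fun p => decide (R v p.1)).map Prod.snd).toFinset with hAdef
  set B : Finset V := ((L.filter fun p => decide (¬ R v p.1)).map Prod.snd).toFinset with hBdef
  have hmemA : ∀ x, x ∈ A ↔ ∃ p ∈ L, R v p.1 ∧ p.2 = x := by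
    intro x
    simp only [hAdef, List.mem_toFinset, List.mem_map, List.mem_filter,
      decide_eq_true_eq]
    constructor
    · rintro ⟨p, ⟨hp, hr⟩, he⟩; exact ⟨p, hp, hr, he⟩
    · rintro ⟨p, hp, hr, he⟩; exact ⟨p, ⟨hp, hr⟩, he⟩
  have hmemB : ∀ x, x ∈ B ↔ ∃ p ∈ L, ¬ R v p.1 ∧ p.2 = x := by
    intro x
    simp only [hBdef, List.mem_toFinset, List.mem_map, List.mem_filter,
      decide_eq_true_eq]
    constructor
    · rintro ⟨p, ⟨hp, hr⟩, he⟩; exact ⟨p, hp, hr, he⟩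
    · rintro ⟨p, hp, hr, he⟩; exact ⟨p, ⟨hp, hr⟩, he⟩
  obtain ⟨w, hwA, hwB, hA, hB⟩ := hext A B (by
    rw [Finset.disjoint_left]
    intro x hxA hxB
    obtain ⟨p, hp, hrp, hep⟩ := (hmemA x).mp hxA
    obtain ⟨r, hr, hrr, her⟩ := (hmemB x).mp hxB
    exact hrr ((hsnd r hr p hp (her.trans hep.symm)) ▸ hrp))
  have hwsnd : ∀ p ∈ L, w ≠ p.2 := by
    intro p hp he
    by_cases h : R v p.1
    · exact hwA ((hmemA w).mpr ⟨p, hp, h, he.symm⟩)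
    · exact hwB ((hmemB w).mpr ⟨p, hp, h, he.symm⟩)
  refine ⟨w, ?_, ?_⟩
  · intro hw
    obtain ⟨p, hp, he⟩ := List.mem_map.mp hw
    exact hwsnd p hp he.symm
  · intro p hp
    have hvp : v ≠ p.1 := by
      intro he; exact hv (List.mem_map.mpr ⟨p, hp, he.symm⟩)
    have key : R v p.1 ↔ R w p.2 := by
      constructor
      · intro h; exact hA p.2 ((hmemA p.2).mpr ⟨p, hp, h, rfl⟩)
      · intro h
        by_contra hn
        have : R p.2 w := hB p.2 ((hmemB p.2).mpr ⟨p, hp, hn, rfl⟩)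
        exact (htot w p.2 (hwsnd p hp)).mp h this
    refine ⟨key, ?_⟩
    rw [htot p.1 v (Ne.symm hvp), htot p.2 w (Ne.symm (hwsnd p hp))]
    exact not_congr key

theorem ext_pair' [Nonempty V]
    (htot : ∀ x y : V, x ≠ y → (R x y ↔ ¬ R y x))
    (hext : ∀ A B : Finset V, Disjoint A B →
      ∃ x, x ∉ A ∧ x ∉ B ∧ (∀ a ∈ A, R x a) ∧ (∀ b ∈ B, R b x))
    (L : List (V × V)) (v : V) :
    ∃ w, (Inv R L ∧ v ∉ L.map Prod.fst) →
      (w ∉ L.map Prod.snd ∧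
        ∀ p ∈ L, (R v p.1 ↔ R w p.2) ∧ (R p.1 v ↔ R p.2 w)) := by
  by_cases h : Inv R L ∧ v ∉ L.map Prod.fst
  · obtain ⟨w, hw⟩ := ext_pair R htot hext L v h.1 h.2
    exact ⟨w, fun _ => hw⟩
  · exact ⟨Classical.arbitrary V, fun h' => absurd h' h⟩

theorem Inv_swap {L : List (V × V)} (h : Inv R L) : Inv R (L.map Prod.swap) := by
  obtain ⟨hnd, hiso⟩ := h
  constructor
  · rw [List.pairwise_map]
    exact hnd.imp (fun h => ⟨h.2, h.1⟩)
  · intro p hp r hr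
    obtain ⟨p', hp', rfl⟩ := List.mem_map.mp hp
    obtain ⟨r', hr', rfl⟩ := List.mem_map.mp hr
    exact (hiso p' hp' r' hr').symm

theorem ext_pairL' [Nonempty V]
    (htot : ∀ x y : V, x ≠ y → (R x y ↔ ¬ R y x))
    (hext : ∀ A B : Finset V, Disjoint A B →
      ∃ x, x ∉ A ∧ x ∉ B ∧ (∀ a ∈ A, R x a) ∧ (∀ b ∈ B, R b x))
    (L : List (V × V)) (w : V) :
    ∃ v, (Inv R L ∧ w ∉ L.map Prod.snd) →
      (v ∉ L.map Prod.fst ∧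
        ∀ p ∈ L, (R v p.1 ↔ R w p.2) ∧ (R p.1 v ↔ R p.2 w)) := by
  by_cases h : Inv R L ∧ w ∉ L.map Prod.snd
  · have h2 : w ∉ (L.map Prod.swap).map Prod.fst := by
      rw [List.map_map]
      intro hw
      obtain ⟨p, hp, he⟩ := List.mem_map.mp hw
      exact h.2 (List.mem_map.mpr ⟨p, hp, he⟩)
    obtain ⟨v, hv1, hv2⟩ := ext_pair R htot hext (L.map Prod.swap) w (Inv_swap R h.1) h2
    refine ⟨v, fun _ => ⟨?_, ?_⟩⟩
    · intro hv
      apply hv1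
      rw [List.map_map]
      obtain ⟨p, hp, he⟩ := List.mem_map.mp hv
      exact List.mem_map.mpr ⟨p, hp, he⟩
    · intro p hp
      have := hv2 p.swap (List.mem_map.mpr ⟨p, hp, rfl⟩)
      exact ⟨(this.1).symm.trans (Iff.rfl), by
        · exact ⟨fun h1 => (this.2).mpr h1, fun h1 => (this.2).mp h1⟩⟩
  · exact ⟨Classical.arbitrary V, fun h' => absurd h' h⟩



theorem fresh_ex [Infinite V] (l : List V) : ∃ v : V, v ∉ l := by
  classical
  obtain ⟨v, hv⟩ := Infinite.exists_notMem_finset l.toFinset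
  exact ⟨v, fun h => hv (List.mem_toFinset.mpr h)⟩

noncomputable def fresh [Infinite V] (l : List V) : V := (fresh_ex l).choose

theorem fresh_spec [Infinite V] (l : List V) : fresh l ∉ l := (fresh_ex l).choose_spec

section BF
variable [Infinite V]
  (htot : ∀ x y : V, x ≠ y → (R x y ↔ ¬ R y x))
  (hext : ∀ A B : Finset V, Disjoint A B →
      ∃ x, x ∉ A ∧ x ∉ B ∧ (∀ a ∈ A, R x a) ∧ (∀ b ∈ B, R b x))


noncomputable def extR (L : List (V × V)) (v : V) : V :=
  (ext_pair' R htot hext L v).choose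

noncomputable def extL (L : List (V × V)) (w : V) : V :=
  (ext_pairL' R htot hext L w).choose

open Classical in
noncomputable def stepPair (e : ℕ ≃ V) (L : List (V × V)) (n : ℕ) : V × V :=
  if n % 2 = 0 then
    let v := if e (n/2) ∈ L.map Prod.fst then fresh (L.map Prod.fst) else e (n/2)
    (v, extR R htot hext L v)
  else
    let w := if e (n/2) ∈ L.map Prod.snd then fresh (L.map Prod.snd) else e (n/2)
    (extL R htot hext L w, w)

theorem stepPair_spec (e : ℕ ≃ V) (L : List (V × V)) (n : ℕ) (hI : Inv R L) :
    (stepPair R htot hext e L n).1 ∉ L.map Prod.fst ∧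
    (stepPair R htot hext e L n).2 ∉ L.map Prod.snd ∧
    ∀ q ∈ L, (R (stepPair R htot hext e L n).1 q.1 ↔ R (stepPair R htot hext e L n).2 q.2) ∧
      (R q.1 (stepPair R htot hext e L n).1 ↔ R q.2 (stepPair R htot hext e L n).2) := by
  classical
  rw [stepPair]
  by_cases h : n % 2 = 0
  · rw [if_pos h]
    set v := if e (n/2) ∈ L.map Prod.fst then fresh (L.map Prod.fst) else e (n/2) with hv
    have hvf : v ∉ L.map Prod.fst := by
      rw [hv]; split
      · exact fresh_spec _
      · assumption
    obtain ⟨h1, h2⟩ := (ext_pair' R htot hext L v).choose_spec ⟨hI, hvf⟩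
    exact ⟨hvf, h1, fun q hq => (h2 q hq)⟩
  · rw [if_neg h]
    set w := if e (n/2) ∈ L.map Prod.snd then fresh (L.map Prod.snd) else e (n/2) with hw
    have hwf : w ∉ L.map Prod.snd := by
      rw [hw]; split
      · exact fresh_spec _
      · assumption
    obtain ⟨h1, h2⟩ := (ext_pairL' R htot hext L w).choose_spec ⟨hI, hwf⟩
    exact ⟨h1, hwf, fun q hq => (h2 q hq)⟩

theorem Inv_append (hirr : ∀ x, ¬ R x x) {L : List (V × V)} {p : V × V} (hI : Inv R L)
    (h1 : p.1 ∉ L.map Prod.fst) (h2 : p.2 ∉ L.map Prod.snd)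
    (h3 : ∀ q ∈ L, (R p.1 q.1 ↔ R p.2 q.2) ∧ (R q.1 p.1 ↔ R q.2 p.2)) :
    Inv R (L ++ [p]) := by
  obtain ⟨hnd, hiso⟩ := hI
  constructor
  · rw [List.pairwise_append]
    refine ⟨hnd, List.pairwise_singleton _ _, ?_⟩
    intro q hq p' hp'
    rw [List.mem_singleton] at hp'
    subst hp'
    constructor
    · intro he; exact h1 (List.mem_map.mpr ⟨q, hq, he⟩)
    · intro he; exact h2 (List.mem_map.mpr ⟨q, hq, he⟩)
  · intro x hx y hy
    rw [List.mem_append, List.mem_singleton] at hx hy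
    rcases hx with hx | rfl <;> rcases hy with hy | rfl
    · exact hiso x hx y hy
    · exact (h3 x hx).2
    · exact (h3 y hy).1
    · exact iff_of_false (hirr _) (hirr _)

noncomputable def bflist (e : ℕ ≃ V) (a b : V) : ℕ → List (V × V)
  | 0 => [(a, b)]
  | n+1 => bflist e a b n ++ [stepPair R htot hext e (bflist e a b n) n]

noncomputable def pr (e : ℕ ≃ V) (a b : V) : ℕ → V × V
  | 0 => (a, b)
  | n+1 => stepPair R htot hext e (bflist R htot hext e a b n) n

theorem bflist_eq (e : ℕ ≃ V) (a b : V) (n : ℕ) :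
    bflist R htot hext e a b n = (List.range (n+1)).map (pr R htot hext e a b) := by
  induction n with
  | zero => rw [List.range_succ, List.range_zero]; simp [bflist, pr]
  | succ n ih => rw [bflist, List.range_succ, List.map_append, ← ih]; rfl

theorem bflist_inv (hirr : ∀ x, ¬ R x x) (e : ℕ ≃ V) (a b : V) (n : ℕ) :
    Inv R (bflist R htot hext e a b n) := by
  induction n with
  | zero =>
    refine ⟨List.pairwise_singleton _ _, ?_⟩
    intro p hp r hr
    simp only [bflist, List.mem_singleton] at hp hr
    subst hp; subst hr
    simp [hirr a, hirr b]
  | succ n ih =>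
    obtain ⟨h1, h2, h3⟩ := stepPair_spec R htot hext e (bflist R htot hext e a b n) n ih
    exact Inv_append R hirr ih h1 h2 h3

theorem pr_mem (e : ℕ ≃ V) (a b : V) {i n : ℕ} (h : i ≤ n) :
    pr R htot hext e a b i ∈ bflist R htot hext e a b n := by
  rw [bflist_eq]
  exact List.mem_map_of_mem (List.mem_range.mpr (by omega))

theorem pr_ne (hirr : ∀ x, ¬ R x x) (e : ℕ ≃ V) (a b : V) {i j : ℕ} (h : i < j) :
    (pr R htot hext e a b i).1 ≠ (pr R htot hext e a b j).1 ∧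
    (pr R htot hext e a b i).2 ≠ (pr R htot hext e a b j).2 := by
  have hI := (bflist_inv R htot hext hirr e a b j).1
  rw [bflist_eq, List.pairwise_iff_getElem] at hI
  have := hI i j (by rw [List.length_map, List.length_range]; omega) (by rw [List.length_map, List.length_range]; omega) h
  simpa using this

theorem pr_iso (hirr : ∀ x, ¬ R x x) (e : ℕ ≃ V) (a b : V) (i j : ℕ) :
    (R (pr R htot hext e a b i).1 (pr R htot hext e a b j).1 ↔
     R (pr R htot hext e a b i).2 (pr R htot hext e a b j).2) := by
  have hI := (bflist_inv R htot hext hirr e a b (max i j)).2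
  exact hI _ (pr_mem R htot hext e a b (le_max_left i j)) _
    (pr_mem R htot hext e a b (le_max_right i j))

theorem stepPair_even (e : ℕ ≃ V) (L : List (V × V)) (k : ℕ)
    (h : e k ∉ L.map Prod.fst) :
    (stepPair R htot hext e L (2*k)).1 = e k := by
  classical
  rw [stepPair, if_pos (by omega : 2*k % 2 = 0)]
  have hk : 2*k/2 = k := by omega
  show (if e (2*k/2) ∈ L.map Prod.fst then fresh (L.map Prod.fst) else e (2*k/2)) = e k
  rw [hk, if_neg h]

theorem stepPair_odd (e : ℕ ≃ V) (L : List (V × V)) (k : ℕ)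
    (h : e k ∉ L.map Prod.snd) :
    (stepPair R htot hext e L (2*k+1)).2 = e k := by
  classical
  rw [stepPair, if_neg (by omega : ¬ (2*k+1) % 2 = 0)]
  have hk : (2*k+1)/2 = k := by omega
  show (if e ((2*k+1)/2) ∈ L.map Prod.snd then fresh (L.map Prod.snd) else e ((2*k+1)/2)) = e k
  rw [hk, if_neg h]

theorem pr_fst_surj (e : ℕ ≃ V) (a b : V) (k : ℕ) :
    ∃ i, (pr R htot hext e a b i).1 = e k := by
  classical
  by_cases h : e k ∈ (bflist R htot hext e a b (2*k)).map Prod.fst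
  · rw [bflist_eq, List.map_map] at h
    obtain ⟨i, _, hi⟩ := List.mem_map.mp h
    exact ⟨i, hi⟩
  · exact ⟨2*k+1, stepPair_even R htot hext e _ k h⟩

theorem pr_snd_surj (e : ℕ ≃ V) (a b : V) (k : ℕ) :
    ∃ i, (pr R htot hext e a b i).2 = e k := by
  classical
  by_cases h : e k ∈ (bflist R htot hext e a b (2*k+1)).map Prod.snd
  · rw [bflist_eq, List.map_map] at h
    obtain ⟨i, _, hi⟩ := List.mem_map.mp h
    exact ⟨i, hi⟩
  · exact ⟨2*k+2, stepPair_odd R htot hext e _ k h⟩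

include htot hext in
theorem exists_nontrivial_aut (hirr : ∀ x, ¬ R x x) (e : ℕ ≃ V) :
    ∃ g : V ≃ V, (∀ x y, R x y ↔ R (g x) (g y)) ∧ ∃ v, g v ≠ v := by
  classical
  set a := e 0 with ha
  set b := fresh [a] with hb
  have hab : b ≠ a := by
    have := fresh_spec (V := V) [a]
    rw [← hb] at this
    simpa using this
  set s : ℕ → V := fun n => (pr R htot hext e a b n).1 with hs_def
  set t : ℕ → V := fun n => (pr R htot hext e a b n).2 with ht_def
  have hs_inj : Function.Injective s := by
    intro i j hij
    by_contra hne
    rcases lt_or_gt_of_ne hne with h | h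
    · exact (pr_ne R htot hext hirr e a b h).1 hij
    · exact (pr_ne R htot hext hirr e a b h).1 hij.symm
  have ht_inj : Function.Injective t := by
    intro i j hij
    by_contra hne
    rcases lt_or_gt_of_ne hne with h | h
    · exact (pr_ne R htot hext hirr e a b h).2 hij
    · exact (pr_ne R htot hext hirr e a b h).2 hij.symm
  have hs_surj : Function.Surjective s := by
    intro v
    obtain ⟨i, hi⟩ := pr_fst_surj R htot hext e a b (e.symm v)
    exact ⟨i, by rw [hs_def]; simp only; rw [hi, e.apply_symm_apply]⟩
  have ht_surj : Function.Surjective t := by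
    intro v
    obtain ⟨i, hi⟩ := pr_snd_surj R htot hext e a b (e.symm v)
    exact ⟨i, by rw [ht_def]; simp only; rw [hi, e.apply_symm_apply]⟩
  let E1 := Equiv.ofBijective s ⟨hs_inj, hs_surj⟩
  let E2 := Equiv.ofBijective t ⟨ht_inj, ht_surj⟩
  refine ⟨E1.symm.trans E2, ?_, a, ?_⟩
  · intro x y
    have hx : s (E1.symm x) = x := E1.apply_symm_apply x
    have hy : s (E1.symm y) = y := E1.apply_symm_apply y
    conv_lhs => rw [← hx, ← hy]
    exact pr_iso R htot hext hirr e a b (E1.symm x) (E1.symm y)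
  · have h0 : E1.symm a = 0 := by
      apply E1.injective
      rw [E1.apply_symm_apply]
      rfl
    show E2 (E1.symm a) ≠ a
    rw [h0]
    exact hab

end BF
end RandTour2


/-- A countably infinite tournament with the extension property
(the random tournament `𝕋^∞`) has distinguishing number 2. -/
theorem random_tournament_distinguishing_number_two
    (V : Type*) [Countable V] [Infinite V] (R : V → V → Prop)
    (hirr : ∀ x, ¬ R x x)
    (htot : ∀ x y : V, x ≠ y → (R x y ↔ ¬ R y x))
    (hext : ∀ A B : Finset V, Disjoint A B →
      ∃ x, x ∉ A ∧ x ∉ B ∧ (∀ a ∈ A, R x a) ∧ (∀ b ∈ B, R b x)) :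
    (∃ c : V → Bool, ∀ g : V ≃ V, (∀ x y, R x y ↔ R (g x) (g y)) →
        (∀ v, c (g v) = c v) → ∀ v, g v = v) ∧
    (∃ g : V ≃ V, (∀ x y, R x y ↔ R (g x) (g y)) ∧ ∃ v, g v ≠ v) := by
  obtain ⟨e'⟩ : Nonempty (V ≃ ℕ) := nonempty_equiv_of_countable
  exact ⟨RandTour.exists_distinguishing R htot hext hirr e'.symm,
    RandTour2.exists_nontrivial_aut R htot hext hirr e'.symm⟩
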